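/- In the same random group-code ensemble, for a ∈ J, ã ∈ T_{θ̂}(a), and x, x̃ ∈ G: Pr(φ(a)+V = x and φ(ã)+V = x̃) equals (1/|G|)·(1/|H_{θ̂}|) if x̃ − x ∈ H_{θ̂}, and 0 otherwise, where H_{θ̂} = ⊕_{(p,r,m)} p^{θ(θ̂)_{p,r}} Z_{p^r} and θ(θ̂)_{p,r} = min over s with k_{p,s} ≠ 0 of (|r−s|⁺ + θ̂_{p,s}). -/

import Mathlib

open AddSubgroup

namespace GroupCodeEnsemble

variable (ιJ ιG : Type) [Fintype ιJ] [Fintype ιG]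

/-- The message group `J = ⊕_{(q,s)} Z_{q^s}^{k_{q,s}}`, indexed by `ιJ`. -/
abbrev JGrp (Q S k : ιJ → ℕ) : Type := ∀ i : ιJ, Fin (k i) → ZMod (Q i ^ S i)

/-- The channel-input group `G = ⊕_{(p,r)} Z_{p^r}` (one ring per index `j : ιG`). -/
abbrev GGrp (P R : ιG → ℕ) : Type := ∀ j : ιG, ZMod (P j ^ R j)

/-- Admissibility of a generator `g_{(q,s,l)→(p,r,m)}`: it is `0` when `q ≠ p`, and lies
in `p^{|r-s|⁺} Z_{p^r}` when `q = p` (note `R j - S i` is truncated subtraction, i.e.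
`|r - s|⁺`). -/
def GenOK (Q S : ιJ → ℕ) (P R : ιG → ℕ) (i : ιJ) (j : ιG)
    (x : ZMod (P j ^ R j)) : Prop :=
  (Q i ≠ P j → x = 0) ∧
  (Q i = P j → x ∈ zmultiples ((P j : ZMod (P j ^ R j)) ^ (R j - S i)))

/-- The set of admissible generator tuples of the ensemble. -/
abbrev Gen (Q S k : ιJ → ℕ) (P R : ιG → ℕ) : Type :=
  ∀ i : ιJ, ∀ j : ιG, Fin (k i) →
    {x : ZMod (P j ^ R j) // GenOK ιJ ιG Q S P R i j x}

/-- The encoding map `φ(a) = ⊕_j Σ_{(i,l)} a_{i,l} · g_{(i,l)→j}`. -/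
noncomputable def encode (Q S k : ιJ → ℕ) (P R : ιG → ℕ)
    (g : Gen ιJ ιG Q S k P R) (a : JGrp ιJ Q S k) : GGrp ιG P R :=
  fun j => ∑ i : ιJ, ∑ l : Fin (k i), (a i l).val • ((g i j l : ZMod (P j ^ R j)))

/-- Membership of `x` in the class indexed by `θ` (`T_θ̂`-classes), with the convention
that the class `θ = s` is `{0}`. -/
def inClass (p s k θ : ℕ) (x : Fin k → ZMod (p ^ s)) : Prop :=
  if θ < s then
    (∀ l, x l ∈ zmultiples ((p : ZMod (p ^ s)) ^ θ)) ∧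
    ¬ (∀ l, x l ∈ zmultiples ((p : ZMod (p ^ s)) ^ (θ + 1)))
  else x = 0

/-- The exponent `θ(θ̂)_{p,r} = min_{s : k_{p,s} ≠ 0} (|r-s|⁺ + θ̂_{p,s})` defining the
subgroup `H_θ̂`. -/
noncomputable def thetaG (Q S k : ιJ → ℕ) (P R : ιG → ℕ) (θ : ιJ → ℕ) (j : ιG) : ℕ :=
  sInf {n : ℕ | ∃ i : ιJ, Q i = P j ∧ 0 < k i ∧ n = (R j - S i) + θ i}

/-! ### auxiliary lemmas -/
section Aux
set_option linter.unusedSectionVars false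

lemma mem_zmultiples_pow_iff_dvd {p s c : ℕ} (hc : c ≤ s) [NeZero (p ^ s)]
    (x : ZMod (p ^ s)) :
    x ∈ zmultiples ((p : ZMod (p ^ s)) ^ c) ↔ p ^ c ∣ x.val := by
  constructor
  · rintro ⟨n, rfl⟩
    have h1 : (n • ((p : ZMod (p ^ s)) ^ c)) =
        ((((n : ZMod (p ^ s)).val * p ^ c : ℕ)) : ZMod (p ^ s)) := by
      simp only [zsmul_eq_mul]
      push_cast [ZMod.natCast_val, ZMod.cast_id]
      ring
    simp only [h1, ZMod.val_natCast]
    exact (Nat.dvd_mod_iff (pow_dvd_pow _ hc)).mpr ⟨_, mul_comm _ _⟩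
  · rintro ⟨t, ht⟩
    refine ⟨(t : ℤ), ?_⟩
    simp only [zsmul_eq_mul]
    have hx : x = ((x.val : ℕ) : ZMod (p ^ s)) := by
      rw [ZMod.natCast_val, ZMod.cast_id]
    rw [hx, ht]
    push_cast
    ring

lemma mul_mem_zmultiples {N : ℕ} [NeZero N] (y x : ZMod N) : y * x ∈ zmultiples x := by
  refine ⟨(y.val : ℤ), ?_⟩
  simp only [zsmul_eq_mul]
  push_cast [ZMod.natCast_val, ZMod.cast_id]
  rfl

lemma zmultiples_pow_le {N p : ℕ} [NeZero N] {b c : ℕ} (h : b ≤ c) :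
    zmultiples ((p : ZMod N) ^ c) ≤ zmultiples ((p : ZMod N) ^ b) := by
  rw [zmultiples_le]
  have hc : (p : ZMod N) ^ c = (p : ZMod N) ^ (c - b) * (p : ZMod N) ^ b := by
    rw [← pow_add]; congr 1; omega
  rw [hc]
  exact mul_mem_zmultiples _ _

lemma card_fiber {A B : Type} [AddCommGroup A] [AddCommGroup B] (F : A →+ B) {z : B}
    (hz : z ∈ F.range) : Nat.card {g : A // F g = z} = Nat.card F.ker := by
  obtain ⟨a₀, ha₀⟩ := hz
  refine Nat.card_congr ⟨fun g => ⟨g.1 - a₀, ?_⟩, fun g => ⟨g.1 + a₀, ?_⟩, ?_, ?_⟩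
  · simp [AddMonoidHom.mem_ker, map_sub, g.2, ha₀]
  · have := AddMonoidHom.mem_ker.mp g.2
    simp [map_add, this, ha₀]
  · intro g; ext; simp
  · intro g; ext; simp

lemma card_ker_mul_range {A B : Type} [AddCommGroup A] [AddCommGroup B] (F : A →+ B) :
    Nat.card A = Nat.card F.ker * Nat.card F.range := by
  rw [AddSubgroup.card_eq_card_quotient_mul_card_addSubgroup F.ker,
    Nat.card_congr (QuotientAddGroup.quotientKerEquivRange F).toEquiv, mul_comm]

def genSub (Q S : ιJ → ℕ) (P R : ιG → ℕ) (i : ιJ) (j : ιG) :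
    AddSubgroup (ZMod (P j ^ R j)) where
  carrier := {x | GenOK ιJ ιG Q S P R i j x}
  zero_mem' := ⟨fun _ => rfl, fun _ => zero_mem _⟩
  add_mem' := by
    rintro x y ⟨hx1, hx2⟩ ⟨hy1, hy2⟩
    exact ⟨fun h => by rw [hx1 h, hy1 h, add_zero],
      fun h => add_mem (hx2 h) (hy2 h)⟩
  neg_mem' := by
    rintro x ⟨hx1, hx2⟩
    exact ⟨fun h => by rw [hx1 h, neg_zero], fun h => neg_mem (hx2 h)⟩

instance (Q S : ιJ → ℕ) (P R : ιG → ℕ) (i : ιJ) (j : ιG) :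
    AddCommGroup {x : ZMod (P j ^ R j) // GenOK ιJ ιG Q S P R i j x} :=
  inferInstanceAs (AddCommGroup (genSub ιJ ιG Q S P R i j))

@[simp] lemma genCoe_add {Q S : ιJ → ℕ} {P R : ιG → ℕ} {i : ιJ} {j : ιG}
    (u v : {x : ZMod (P j ^ R j) // GenOK ιJ ιG Q S P R i j x}) :
    ((u + v : {x : ZMod (P j ^ R j) // GenOK ιJ ιG Q S P R i j x}) : ZMod (P j ^ R j))
      = (u : ZMod (P j ^ R j)) + v := rfl

@[simp] lemma genCoe_zero {Q S : ιJ → ℕ} {P R : ιG → ℕ} {i : ιJ} {j : ιG} :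
    ((0 : {x : ZMod (P j ^ R j) // GenOK ιJ ιG Q S P R i j x}) : ZMod (P j ^ R j)) = 0 := rfl

lemma pow_smul_gen_eq_zero {Q S : ιJ → ℕ} {P R : ιG → ℕ} {i : ιJ} {j : ιG}
    (x : ZMod (P j ^ R j)) (hx : GenOK ιJ ιG Q S P R i j x) :
    (Q i ^ S i : ℕ) • x = 0 := by
  by_cases hqp : Q i = P j
  · obtain ⟨n, hn⟩ := hx.2 hqp
    rw [← hn]
    have h1 : (Q i ^ S i : ℕ) • (n • ((P j : ZMod (P j ^ R j)) ^ (R j - S i)))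
        = n • (((Q i ^ S i * P j ^ (R j - S i) : ℕ)) : ZMod (P j ^ R j)) := by
      rw [smul_comm]
      push_cast
      rw [nsmul_eq_mul]
      push_cast
      ring_nf
    rw [h1]
    have h0 : ((Q i ^ S i * P j ^ (R j - S i) : ℕ) : ZMod (P j ^ R j)) = 0 := by
      rw [ZMod.natCast_eq_zero_iff]
      rw [hqp, ← pow_add]
      exact pow_dvd_pow _ (by omega)
    rw [h0, smul_zero]
  · rw [hx.1 hqp, smul_zero]

lemma val_smul_add {Q S : ιJ → ℕ} {P R : ιG → ℕ} {i : ιJ} {j : ιG}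
    (hQ : 0 < Q i ^ S i)
    (x : ZMod (P j ^ R j)) (hx : GenOK ιJ ιG Q S P R i j x)
    (u v : ZMod (Q i ^ S i)) :
    ((u + v).val) • x = u.val • x + v.val • x := by
  haveI : NeZero (Q i ^ S i) := ⟨hQ.ne'⟩
  have hval : u.val + v.val = (u + v).val + ((u.val + v.val) / (Q i ^ S i)) * (Q i ^ S i) := by
    rw [ZMod.val_add]
    exact (Nat.mod_add_div' _ _).symm
  have h0 := pow_smul_gen_eq_zero ιJ ιG x hx
  calc ((u + v).val) • x
      = ((u + v).val) • x + ((u.val + v.val) / (Q i ^ S i)) • ((Q i ^ S i : ℕ) • x) := by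
        rw [h0, smul_zero, add_zero]
    _ = (u.val + v.val) • x := by rw [← mul_smul, ← add_smul, ← hval]
    _ = u.val • x + v.val • x := add_smul _ _ _

lemma inClass_val_dvd {q s kk θ : ℕ} (hθ : θ ≤ s) [NeZero (q ^ s)]
    {x : Fin kk → ZMod (q ^ s)} (h : inClass q s kk θ x) (l : Fin kk) :
    q ^ θ ∣ (x l).val := by
  unfold inClass at h
  split at h
  · exact (mem_zmultiples_pow_iff_dvd (by omega) _).mp (h.1 l)
  · rw [h]
    simp

end Aux

set_option maxHeartbeats 1000000 in
/-- In the random Abelian group-code ensemble (generators independent and uniform over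
their admissible sets, dither `V` uniform on `G` and independent), for `a ∈ J`,
`ã ∈ T_θ̂(a)` and `x, x̃ ∈ G`:
`Pr(φ(a)+V = x ∧ φ(ã)+V = x̃) = (1/|G|)(1/|H_θ̂|)` if `x̃ - x ∈ H_θ̂`, and `= 0`
otherwise, where `H_θ̂ = ⊕_j p^{θ(θ̂)_{p,r}} Z_{p^r}`. -/
theorem stmt17 (Q S k : ιJ → ℕ) (P R : ιG → ℕ)
    (hQ : ∀ i, (Q i).Prime) (hP : ∀ j, (P j).Prime)
    (hS : ∀ i, 0 < S i) (hR : ∀ j, 0 < R j)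
    (hcover : ∀ j, ∃ i, Q i = P j ∧ 0 < k i)
    (θ : ιJ → ℕ) (hθ : ∀ i, θ i ≤ S i)
    (a b : JGrp ιJ Q S k)
    (hb : ∀ i, inClass (Q i) (S i) (k i) (θ i) (b i - a i))
    (x y : GGrp ιG P R) :
    ((∀ j, y j - x j ∈
        zmultiples ((P j : ZMod (P j ^ R j)) ^ thetaG ιJ ιG Q S k P R θ j)) →
      (Nat.card {gv : Gen ιJ ιG Q S k P R × GGrp ιG P R //
          encode ιJ ιG Q S k P R gv.1 a + gv.2 = x ∧
          encode ιJ ιG Q S k P R gv.1 b + gv.2 = y} : ℝ) /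
        (Nat.card (Gen ιJ ιG Q S k P R × GGrp ιG P R) : ℝ)
      = ((Nat.card (GGrp ιG P R) : ℝ) *
          (Nat.card {h : GGrp ιG P R // ∀ j, h j ∈
            zmultiples ((P j : ZMod (P j ^ R j)) ^ thetaG ιJ ιG Q S k P R θ j)} : ℝ))⁻¹) ∧
    ((¬ ∀ j, y j - x j ∈
        zmultiples ((P j : ZMod (P j ^ R j)) ^ thetaG ιJ ιG Q S k P R θ j)) →
      (Nat.card {gv : Gen ιJ ιG Q S k P R × GGrp ιG P R //
          encode ιJ ιG Q S k P R gv.1 a + gv.2 = x ∧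
          encode ιJ ιG Q S k P R gv.1 b + gv.2 = y} : ℝ) /
        (Nat.card (Gen ιJ ιG Q S k P R × GGrp ιG P R) : ℝ) = 0) := by
  classical
  have hNZ : ∀ j : ιG, NeZero (P j ^ R j) := fun j => ⟨pow_ne_zero _ (hP j).ne_zero⟩
  have finG : ∀ j, Finite (ZMod (P j ^ R j)) := fun j => by
    haveI := hNZ j; infer_instance
  haveI hfinGG : Finite (GGrp ιG P R) := @Pi.finite _ _ _ finG
  haveI hfinGen : Finite (Gen ιJ ιG Q S k P R) :=
    @Pi.finite _ _ _ (fun i => @Pi.finite _ _ _ (fun j =>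
      @Pi.finite _ _ _ (fun _ => by haveI := finG j; exact Subtype.finite)))
  set d : JGrp ιJ Q S k := fun i => b i - a i with hd
  -- the encoding difference as an additive hom
  have encadd : ∀ (c : JGrp ιJ Q S k) (g g' : Gen ιJ ιG Q S k P R),
      encode ιJ ιG Q S k P R (g + g') c
        = encode ιJ ιG Q S k P R g c + encode ιJ ιG Q S k P R g' c := by
    intro c g g'
    funext j
    simp [encode, smul_add, Finset.sum_add_distrib]
  set Fh : Gen ιJ ιG Q S k P R →+ GGrp ιG P R :=
    AddMonoidHom.mk' (fun g => encode ιJ ιG Q S k P R g b - encode ιJ ιG Q S k P R g a)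
      (by intro g g'; simp only [encadd]; abel) with hFhdef
  have hFh : ∀ (g : Gen ιJ ιG Q S k P R) (j : ιG),
      Fh g j = ∑ i : ιJ, ∑ l : Fin (k i), (d i l).val • ((g i j l : ZMod (P j ^ R j))) := by
    intro g j
    have : Fh g j = (∑ i : ιJ, ∑ l : Fin (k i), (b i l).val • ((g i j l : ZMod (P j ^ R j))))
        - ∑ i : ιJ, ∑ l : Fin (k i), (a i l).val • ((g i j l : ZMod (P j ^ R j))) := rfl
    rw [this, ← Finset.sum_sub_distrib]
    refine Finset.sum_congr rfl fun i _ => ?_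
    rw [← Finset.sum_sub_distrib]
    refine Finset.sum_congr rfl fun l _ => ?_
    have hQpos : 0 < Q i ^ S i := pow_pos (hQ i).pos _
    have hba : d i l + a i l = b i l := by simp [hd]
    have := val_smul_add ιJ ιG hQpos ((g i j l : ZMod (P j ^ R j))) (g i j l).2 (d i l) (a i l)
    rw [hba] at this
    rw [this]
    abel
  -- the target subgroup
  set HSub : AddSubgroup (GGrp ιG P R) :=
    AddSubgroup.pi Set.univ
      (fun j => zmultiples ((P j : ZMod (P j ^ R j)) ^ thetaG ιJ ιG Q S k P R θ j)) with hHSub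
  -- range of Fh is HSub
  have hrange : Fh.range = HSub := by
    apply le_antisymm
    · rintro w ⟨g, rfl⟩
      rw [hHSub, AddSubgroup.mem_pi]
      intro j _
      rw [hFh]
      refine sum_mem fun i _ => sum_mem fun l _ => ?_
      by_cases hqp : Q i = P j
      · haveI := hNZ j
        have hk : 0 < k i := l.pos
        have hle : thetaG ιJ ιG Q S k P R θ j ≤ (R j - S i) + θ i :=
          Nat.sInf_le ⟨i, hqp, hk, rfl⟩
        haveI : NeZero (Q i ^ S i) := ⟨(pow_pos (hQ i).pos _).ne'⟩
        have hdvd : Q i ^ θ i ∣ (d i l).val := inClass_val_dvd (hθ i) (hb i) l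
        obtain ⟨t, ht⟩ := hdvd
        obtain ⟨n, hn⟩ := (g i j l).2.2 hqp
        refine zmultiples_pow_le hle ?_
        have hterm : (d i l).val • ((g i j l : ZMod (P j ^ R j)))
            = ((t : ZMod (P j ^ R j)) * (n : ZMod (P j ^ R j)))
              * (P j : ZMod (P j ^ R j)) ^ ((R j - S i) + θ i) := by
          rw [← hn]
          simp only [nsmul_eq_mul, zsmul_eq_mul]
          rw [ht, hqp]
          push_cast
          ring
        rw [hterm]
        exact mul_mem_zmultiples _ _
      · rw [(g i j l).2.1 hqp, smul_zero]
        exact zero_mem _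
    · intro w hw
      rw [hHSub, AddSubgroup.mem_pi] at hw
      have hw' : ∀ j, w j ∈ zmultiples ((P j : ZMod (P j ^ R j)) ^ thetaG ιJ ιG Q S k P R θ j) :=
        fun j => hw j (Set.mem_univ j)
      have hws : w = ∑ j, Pi.single j (w j) := (Finset.univ_sum_single w).symm
      rw [hws]
      refine AddSubgroup.sum_mem _ fun j _ => ?_
      haveI := hNZ j
      -- τ is attained
      obtain ⟨i₀, hqp, hk, hmin⟩ : thetaG ιJ ιG Q S k P R θ j ∈
          {n : ℕ | ∃ i : ιJ, Q i = P j ∧ 0 < k i ∧ n = (R j - S i) + θ i} := by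
        obtain ⟨i, h1, h2⟩ := hcover j
        exact Nat.sInf_mem ⟨(R j - S i) + θ i, i, h1, h2, rfl⟩
      by_cases hr : R j ≤ thetaG ιJ ιG Q S k P R θ j
      · have h0 : (P j : ZMod (P j ^ R j)) ^ thetaG ιJ ιG Q S k P R θ j = 0 := by
          have hc : ((P j ^ thetaG ιJ ιG Q S k P R θ j : ℕ) : ZMod (P j ^ R j)) = 0 := by
            rw [ZMod.natCast_eq_zero_iff]
            exact pow_dvd_pow _ hr
          push_cast at hc
          exact hc
        have hw0 : w j = 0 := by
          obtain ⟨n, hn⟩ := hw' j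
          simp only [← hn, h0, smul_zero]
        rw [hw0, Pi.single_zero]
        exact zero_mem _
      · have hsθ : θ i₀ < S i₀ := by
          have := hθ i₀
          omega
        have hcls := hb i₀
        unfold inClass at hcls
        rw [if_pos hsθ] at hcls
        obtain ⟨hall, hnot⟩ := hcls
        push_neg at hnot
        obtain ⟨l₀, hl₀⟩ := hnot
        haveI : NeZero (Q i₀ ^ S i₀) := ⟨(pow_pos (hQ i₀).pos _).ne'⟩
        have hd1 : Q i₀ ^ θ i₀ ∣ (d i₀ l₀).val :=
          (mem_zmultiples_pow_iff_dvd (hθ i₀) _).mp (hall l₀)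
        have hd2 : ¬ Q i₀ ^ (θ i₀ + 1) ∣ (d i₀ l₀).val := by
          intro hdvd
          exact hl₀ ((mem_zmultiples_pow_iff_dvd hsθ _).mpr hdvd)
        obtain ⟨wN, hwN⟩ := hd1
        have hpw : ¬ Q i₀ ∣ wN := by
          rintro ⟨t, ht⟩
          exact hd2 ⟨t, by rw [hwN, ht]; ring⟩
        have hu : IsUnit ((wN : ZMod (P j ^ R j))) := by
          rw [ZMod.isUnit_iff_coprime]
          have hcop : Nat.Coprime (P j) wN := by
            rw [(hP j).coprime_iff_not_dvd]
            rw [← hqp]; exact hpw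
          exact Nat.Coprime.pow_right _ hcop.symm
        obtain ⟨U, hU⟩ := hu
        obtain ⟨nw, hnw⟩ := hw' j
        have hwU : (wN : ZMod (P j ^ R j)) * ((U⁻¹ : (ZMod (P j ^ R j))ˣ) : ZMod (P j ^ R j)) = 1 := by
          rw [← hU]
          exact U.mul_inv
        set c : ZMod (P j ^ R j) :=
          ((U⁻¹ : (ZMod (P j ^ R j))ˣ) : ZMod (P j ^ R j)) * (nw : ZMod (P j ^ R j))
            * (P j : ZMod (P j ^ R j)) ^ (R j - S i₀) with hc
        have hcmem : c ∈ zmultiples ((P j : ZMod (P j ^ R j)) ^ (R j - S i₀)) :=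
          mul_mem_zmultiples _ _
        have hok : GenOK ιJ ιG Q S P R i₀ j c := ⟨fun h => absurd hqp h, fun _ => hcmem⟩
        set g : Gen ιJ ιG Q S k P R :=
          Function.update (0 : Gen ιJ ιG Q S k P R) i₀
            (Function.update
              (0 : ∀ j' : ιG, Fin (k i₀) → {x : ZMod (P j' ^ R j') // GenOK ιJ ιG Q S P R i₀ j' x}) j
              (Function.update
                (0 : Fin (k i₀) → {x : ZMod (P j ^ R j) // GenOK ιJ ιG Q S P R i₀ j x}) l₀
                ⟨c, hok⟩)) with hg
        refine ⟨g, ?_⟩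
        funext j''
        rw [hFh]
        by_cases hj : j'' = j
        · subst hj
          rw [Pi.single_eq_same]
          rw [Finset.sum_eq_single i₀]
          · rw [hg, Function.update_self, Function.update_self]
            rw [Finset.sum_eq_single l₀]
            · rw [Function.update_self]
              -- key computation
              have : ((d i₀ l₀).val) • c = (nw : ℤ) • ((P j'' : ZMod (P j'' ^ R j'')) ^ thetaG ιJ ιG Q S k P R θ j'') := by
                simp only [nsmul_eq_mul, zsmul_eq_mul, hc]
                rw [hwN, hmin, pow_add]
                push_cast [hqp]
                calc ((P j'' : ZMod (P j'' ^ R j'')) ^ θ i₀ * (wN : ZMod (P j'' ^ R j'')))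
                      * (((U⁻¹ : (ZMod (P j'' ^ R j''))ˣ) : ZMod (P j'' ^ R j'')) * (nw : ZMod (P j'' ^ R j''))
                        * (P j'' : ZMod (P j'' ^ R j'')) ^ (R j'' - S i₀))
                    = ((wN : ZMod (P j'' ^ R j'')) * ((U⁻¹ : (ZMod (P j'' ^ R j''))ˣ) : ZMod (P j'' ^ R j'')))
                        * ((nw : ZMod (P j'' ^ R j'')) * ((P j'' : ZMod (P j'' ^ R j'')) ^ (R j'' - S i₀)
                          * (P j'' : ZMod (P j'' ^ R j'')) ^ θ i₀)) := by ring
                  _ = (nw : ZMod (P j'' ^ R j'')) * ((P j'' : ZMod (P j'' ^ R j'')) ^ (R j'' - S i₀)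
                          * (P j'' : ZMod (P j'' ^ R j'')) ^ θ i₀) := by rw [hwU, one_mul]
              rw [this]
              exact hnw
            · intro l _ hl
              rw [Function.update_of_ne hl]
              simp
            · intro h
              exact absurd (Finset.mem_univ _) h
          · intro i _ hi
            rw [hg, Function.update_of_ne hi]
            simp
          · intro h
            exact absurd (Finset.mem_univ _) h
        · rw [Pi.single_eq_of_ne hj]
          refine Finset.sum_eq_zero fun i _ => Finset.sum_eq_zero fun l _ => ?_
          by_cases hi : i = i₀
          · subst hi
            rw [hg, Function.update_self, Function.update_of_ne hj]
            simp
          · rw [hg, Function.update_of_ne hi]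
            simp
  -- the fiber equivalence
  have e1 : {gv : Gen ιJ ιG Q S k P R × GGrp ιG P R //
        encode ιJ ιG Q S k P R gv.1 a + gv.2 = x ∧
        encode ιJ ιG Q S k P R gv.1 b + gv.2 = y}
      ≃ {g : Gen ιJ ιG Q S k P R // Fh g = y - x} := by
    refine ⟨fun gv => ⟨gv.1.1, ?_⟩,
      fun g => ⟨(g.1, x - encode ιJ ιG Q S k P R g.1 a), ?_, ?_⟩, ?_, ?_⟩
    · have h1 := gv.2.1
      have h2 := gv.2.2
      show encode ιJ ιG Q S k P R gv.1.1 b - encode ιJ ιG Q S k P R gv.1.1 a = y - x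
      calc encode ιJ ιG Q S k P R gv.1.1 b - encode ιJ ιG Q S k P R gv.1.1 a
          = (encode ιJ ιG Q S k P R gv.1.1 b + gv.1.2)
            - (encode ιJ ιG Q S k P R gv.1.1 a + gv.1.2) := by abel
        _ = y - x := by rw [h1, h2]
    · exact add_sub_cancel _ _
    · have h := g.2
      have h' : encode ιJ ιG Q S k P R g.1 b - encode ιJ ιG Q S k P R g.1 a = y - x := h
      calc encode ιJ ιG Q S k P R g.1 b + (x - encode ιJ ιG Q S k P R g.1 a)
          = (encode ιJ ιG Q S k P R g.1 b - encode ιJ ιG Q S k P R g.1 a) + x := by abel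
        _ = (y - x) + x := by rw [h']
        _ = y := by abel
    · intro gv
      apply Subtype.ext
      show ((gv.1.1, x - encode ιJ ιG Q S k P R gv.1.1 a) :
        Gen ιJ ιG Q S k P R × GGrp ιG P R) = gv.1
      have h1 := gv.2.1
      refine Prod.ext rfl ?_
      show x - encode ιJ ιG Q S k P R gv.1.1 a = gv.1.2
      exact sub_eq_of_eq_add' h1.symm
    · intro g
      apply Subtype.ext
      rfl
  -- cardinalities
  have hcardH : Nat.card {h : GGrp ιG P R // ∀ j, h j ∈
        zmultiples ((P j : ZMod (P j ^ R j)) ^ thetaG ιJ ιG Q S k P R θ j)}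
      = Nat.card Fh.range := by
    rw [hrange]
    refine Nat.card_congr (Equiv.subtypeEquivRight fun w => ?_)
    rw [hHSub]
    exact ⟨fun h => (AddSubgroup.mem_pi _).mpr fun j _ => h j,
      fun h j => (AddSubgroup.mem_pi _).mp h j (Set.mem_univ j)⟩
  have hcardGen : Nat.card (Gen ιJ ιG Q S k P R) = Nat.card Fh.ker * Nat.card Fh.range :=
    card_ker_mul_range Fh
  have hker_pos : 0 < Nat.card Fh.ker := Nat.card_pos
  have hrange_pos : 0 < Nat.card Fh.range := Nat.card_pos
  have hGG_pos : 0 < Nat.card (GGrp ιG P R) := Nat.card_pos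
  constructor
  · intro hmem
    have hzr : (y - x) ∈ Fh.range := by
      rw [hrange, hHSub, AddSubgroup.mem_pi]
      intro j _
      exact hmem j
    have hfib := card_fiber Fh hzr
    rw [Nat.card_congr e1, hfib, Nat.card_prod, hcardGen, hcardH]
    have h1 : (Nat.card Fh.ker : ℝ) ≠ 0 := Nat.cast_ne_zero.mpr hker_pos.ne'
    have h2 : (Nat.card Fh.range : ℝ) ≠ 0 := Nat.cast_ne_zero.mpr hrange_pos.ne'
    have h3 : (Nat.card (GGrp ιG P R) : ℝ) ≠ 0 := Nat.cast_ne_zero.mpr hGG_pos.ne'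
    have hgoal : ∀ K Rg G : ℝ, K ≠ 0 → Rg ≠ 0 → G ≠ 0 →
        K / (K * Rg * G) = (G * Rg)⁻¹ := by
      intro K Rg G hK hRg hG
      field_simp
    push_cast
    exact hgoal _ _ _ h1 h2 h3
  · intro hmem
    haveI : IsEmpty {g : Gen ιJ ιG Q S k P R // Fh g = y - x} := by
      constructor
      rintro ⟨g, hgz⟩
      apply hmem
      intro j
      have : (y - x) ∈ Fh.range := ⟨g, hgz⟩
      rw [hrange, hHSub, AddSubgroup.mem_pi] at this
      exact this j (Set.mem_univ j)
    haveI hE : IsEmpty {gv : Gen ιJ ιG Q S k P R × GGrp ιG P R //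
        encode ιJ ιG Q S k P R gv.1 a + gv.2 = x ∧
        encode ιJ ιG Q S k P R gv.1 b + gv.2 = y} := Equiv.isEmpty e1
    have h0 : Nat.card {gv : Gen ιJ ιG Q S k P R × GGrp ιG P R //
        encode ιJ ιG Q S k P R gv.1 a + gv.2 = x ∧
        encode ιJ ιG Q S k P R gv.1 b + gv.2 = y} = 0 := Nat.card_of_isEmpty
    rw [h0]
    norm_num


end GroupCodeEnsemble
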